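/- For every n ≥ 3 and every positive integer t, the independence complex Δ(C_n) of the n-cycle with the standard labeling 1, 2, ..., n is t-sortable: for any two independent sets A, B of C_n with |A| = |B| = t, both components of sort(A,B) are independent sets of C_n. -/

import Mathlib

-- sorted access helper
lemma sorted_le {L : List ℕ} (hL : L.Pairwise (· ≤ ·)) {a b : ℕ} (hab : a ≤ b)
    (hb : b < L.length) : L[a]'(lt_of_le_of_lt hab hb) ≤ L[b] := by
  have := hL.rel_get_of_le (a := ⟨a, lt_of_le_of_lt hab hb⟩) (b := ⟨b, hb⟩) hab
  simpa using this

lemma countP_ge_of_sublist {L M : List ℕ} {p : ℕ → Bool} (h : M.Sublist L)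
    (hM : ∀ x ∈ M, p x) : M.length ≤ L.countP p :=
  le_trans (le_of_eq (List.countP_eq_length.mpr hM).symm) (h.countP_le (p := p))

-- middle window
lemma window {L : List ℕ} {p : ℕ → Bool} {i j : ℕ} (hij : i ≤ j) (hj : j < L.length)
    (h : ∀ k (h1 : i ≤ k) (h2 : k ≤ j), p (L[k]'(lt_of_le_of_lt h2 hj))) :
    j + 1 - i ≤ L.countP p := by
  set M := (L.drop i).take (j + 1 - i) with hM
  have hsub : M.Sublist L := (List.take_sublist _ _).trans (List.drop_sublist _ _)
  have hlen : M.length = j + 1 - i := by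
    simp only [hM, List.length_take, List.length_drop]
    omega
  have hmem : ∀ x ∈ M, p x := by
    intro x hx
    obtain ⟨k, hk, rfl⟩ := List.getElem_of_mem hx
    have hk' : k < j + 1 - i := by rwa [hlen] at hk
    have : M[k] = L[i + k]'(by omega) := by
      simp only [hM, List.getElem_take, List.getElem_drop]
    rw [this]
    exact h (i + k) (by omega) (by omega)
  calc j + 1 - i = M.length := hlen.symm
    _ ≤ L.countP p := countP_ge_of_sublist hsub hmem

-- two end windows
lemma windows {L : List ℕ} {p : ℕ → Bool} {i j : ℕ} (hij : i < j) (hj : j < L.length)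
    (h1 : ∀ k (h1 : k ≤ i), p (L[k]'(by omega)))
    (h2 : ∀ k (hk : j ≤ k) (hk2 : k < L.length), p (L[k]'hk2)) :
    (i + 1) + (L.length - j) ≤ L.countP p := by
  set M := L.take (i + 1) ++ L.drop j with hM
  have hsub : M.Sublist L := by
    have hd : (L.drop j).Sublist (L.drop (i + 1)) := by
      have : L.drop j = (L.drop (i + 1)).drop (j - (i + 1)) := by
        rw [List.drop_drop]; congr 1; omega
      rw [this]; exact List.drop_sublist _ _
    have := hd.append_left (L.take (i + 1))
    rwa [List.take_append_drop] at this
  have hlen : M.length = (i + 1) + (L.length - j) := by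
    simp only [hM, List.length_append, List.length_take, List.length_drop]
    omega
  have hmem : ∀ x ∈ M, p x := by
    intro x hx
    rw [hM, List.mem_append] at hx
    rcases hx with hx | hx
    · obtain ⟨k, hk, rfl⟩ := List.getElem_of_mem hx
      have hk' : k < i + 1 := by
        simp only [List.length_take] at hk; omega
      have : (L.take (i+1))[k] = L[k]'(by omega) := List.getElem_take
      rw [this]; exact h1 k (by omega)
    · obtain ⟨k, hk, rfl⟩ := List.getElem_of_mem hx
      simp only [List.length_drop] at hk
      have : (L.drop j)[k]'(by simp only [List.length_drop]; omega) = L[j + k]'(by omega) :=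
        List.getElem_drop
      rw [this]; exact h2 (j + k) (by omega) (by omega)
  calc (i + 1) + (L.length - j) = M.length := hlen.symm
    _ ≤ L.countP p := countP_ge_of_sublist hsub hmem

-- per-set bound
lemma countP_le_one {A : Finset ℕ} {p : ℕ → Prop} [DecidablePred p] {u v : ℕ}
    (hp : ∀ x, p x → x = u ∨ x = v) (hA : ¬(u ∈ A ∧ v ∈ A)) :
    Multiset.countP p A.val ≤ 1 := by
  rw [Multiset.countP_eq_card_filter, ← Finset.filter_val, ← Finset.card_def]
  by_contra hcon
  push_neg at hcon
  obtain ⟨a, ha, b, hb, hab⟩ := Finset.one_lt_card.mp hcon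
  rw [Finset.mem_filter] at ha hb
  rcases hp a ha.2 with rfl | rfl <;> rcases hp b hb.2 with h | h <;>
    first
      | exact hab h.symm
      | (subst h; exact hA ⟨ha.1, hb.1⟩)
      | (subst h; exact hA ⟨hb.1, ha.1⟩)
      | exact hab (h ▸ rfl)





lemma countP_sort (A B : Finset ℕ) (P : ℕ → Prop) [DecidablePred P] :
    ((A.val + B.val).sort (· ≤ ·)).countP (fun x => decide (P x)) =
      Multiset.countP P A.val + Multiset.countP P B.val := by
  rw [← Multiset.coe_countP, Multiset.sort_eq, Multiset.countP_add]

lemma consec_case (A B : Finset ℕ) {u i j : ℕ}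
    (hAu : ¬(u ∈ A ∧ u + 1 ∈ A)) (hBu : ¬(u ∈ B ∧ u + 1 ∈ B))
    (hpar : i % 2 = j % 2)
    (hi : ((A.val + B.val).sort (· ≤ ·))[i]? = some u)
    (hj : ((A.val + B.val).sort (· ≤ ·))[j]? = some (u + 1)) : False := by
  set L := (A.val + B.val).sort (· ≤ ·) with hL
  have hsort : L.Pairwise (· ≤ ·) := Multiset.pairwise_sort _ _
  obtain ⟨hil, hiv⟩ := List.getElem?_eq_some_iff.mp hi
  obtain ⟨hjl, hjv⟩ := List.getElem?_eq_some_iff.mp hj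
  have hij : i < j := by
    by_contra hcon
    push_neg at hcon
    have := sorted_le hsort hcon hil
    rw [hiv, hjv] at this
    omega
  have hw := window (p := fun x => decide (u ≤ x ∧ x ≤ u + 1)) (le_of_lt hij) hjl ?_
  · rw [countP_sort A B (fun x => u ≤ x ∧ x ≤ u + 1)] at hw
    have hA1 := countP_le_one (A := A) (p := fun x => u ≤ x ∧ x ≤ u + 1)
      (u := u) (v := u + 1) (fun x hx => by omega) hAu
    have hB1 := countP_le_one (A := B) (p := fun x => u ≤ x ∧ x ≤ u + 1)
      (u := u) (v := u + 1) (fun x hx => by omega) hBu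
    omega
  · intro k h1 h2
    simp only [decide_eq_true_eq]
    have ha := sorted_le hsort h1 (lt_of_le_of_lt h2 hjl)
    have hb := sorted_le hsort h2 hjl
    rw [hiv] at ha
    rw [hjv] at hb
    exact ⟨ha, hb⟩

lemma cycle_case (n : ℕ) (hn : 1 < n) (A B : Finset ℕ)
    (hAb : ∀ x ∈ A, 1 ≤ x ∧ x ≤ n) (hBb : ∀ x ∈ B, 1 ≤ x ∧ x ≤ n)
    (hAu : ¬(1 ∈ A ∧ n ∈ A)) (hBu : ¬(1 ∈ B ∧ n ∈ B))
    (hlen : Multiset.card (A.val + B.val) % 2 = 0)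
    {i j : ℕ} (hpar : i % 2 = j % 2)
    (hi : ((A.val + B.val).sort (· ≤ ·))[i]? = some 1)
    (hj : ((A.val + B.val).sort (· ≤ ·))[j]? = some n) : False := by
  set L := (A.val + B.val).sort (· ≤ ·) with hL
  have hsort : L.Pairwise (· ≤ ·) := Multiset.pairwise_sort _ _
  have hLlen : L.length = Multiset.card (A.val + B.val) := Multiset.length_sort _
  have hbound : ∀ x ∈ L, 1 ≤ x ∧ x ≤ n := by
    intro x hx
    rw [hL, Multiset.mem_sort, Multiset.mem_add] at hx
    rcases hx with hx | hx
    · exact hAb x hx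
    · exact hBb x hx
  obtain ⟨hil, hiv⟩ := List.getElem?_eq_some_iff.mp hi
  obtain ⟨hjl, hjv⟩ := List.getElem?_eq_some_iff.mp hj
  have hij : i < j := by
    by_contra hcon
    push_neg at hcon
    have := sorted_le hsort hcon hil
    rw [hiv, hjv] at this
    omega
  have hw := windows (p := fun x => decide (x = 1 ∨ x = n)) hij hjl ?_ ?_
  · rw [countP_sort A B (fun x => x = 1 ∨ x = n)] at hw
    have hA1 := countP_le_one (A := A) (p := fun x => x = 1 ∨ x = n)
      (u := 1) (v := n) (fun x hx => hx) hAu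
    have hB1 := countP_le_one (A := B) (p := fun x => x = 1 ∨ x = n)
      (u := 1) (v := n) (fun x hx => hx) hBu
    omega
  · intro k h1
    simp only [decide_eq_true_eq]
    have ha := sorted_le hsort h1 hil
    rw [hiv] at ha
    have hm := (hbound _ (List.getElem_mem (l := L) (n := k) (by omega))).1
    omega
  · intro k hk hk2
    simp only [decide_eq_true_eq]
    have ha := sorted_le hsort hk hk2
    rw [hjv] at ha
    have hm := (hbound _ (List.getElem_mem (l := L) hk2)).2
    omega


/-- The first component of the sorting `sort(F,G)`: the elements at odd
positions (1-indexed) of the weakly increasing list of the multiset union of `F` and `G`. -/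
def sortFst (F G : Finset ℕ) : Finset ℕ :=
  ((((F.val + G.val).sort (· ≤ ·)).zipIdx.filter (fun p => p.2 % 2 = 0)).map Prod.fst).toFinset

/-- The second component of the sorting `sort(F,G)`: the elements at even
positions (1-indexed). -/
def sortSnd (F G : Finset ℕ) : Finset ℕ :=
  ((((F.val + G.val).sort (· ≤ ·)).zipIdx.filter (fun p => p.2 % 2 = 1)).map Prod.fst).toFinset

def IsIndep (G : SimpleGraph ℕ) (F : Finset ℕ) : Prop :=
  ∀ a ∈ F, ∀ b ∈ F, ¬ G.Adj a b



lemma mem_sortFst {A B : Finset ℕ} {x : ℕ} (hx : x ∈ sortFst A B) :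
    ∃ i, i % 2 = 0 ∧ ((A.val + B.val).sort (· ≤ ·))[i]? = some x := by
  simp only [sortFst, List.mem_toFinset, List.mem_map, List.mem_filter] at hx
  obtain ⟨⟨b, a⟩, ⟨hmem, hpar⟩, rfl⟩ := hx
  rw [List.mem_zipIdx_iff_getElem?] at hmem
  exact ⟨a, by simpa using hpar, hmem⟩

lemma mem_sortSnd {A B : Finset ℕ} {x : ℕ} (hx : x ∈ sortSnd A B) :
    ∃ i, i % 2 = 1 ∧ ((A.val + B.val).sort (· ≤ ·))[i]? = some x := by
  simp only [sortSnd, List.mem_toFinset, List.mem_map, List.mem_filter] at hx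
  obtain ⟨⟨b, a⟩, ⟨hmem, hpar⟩, rfl⟩ := hx
  rw [List.mem_zipIdx_iff_getElem?] at hmem
  exact ⟨a, by simpa using hpar, hmem⟩

theorem stmt_18 (n : ℕ) (hn : 3 ≤ n) (G : SimpleGraph ℕ)
    -- G is the n-cycle with the standard labeling 1, 2, ..., n
    (hG : ∀ a b, G.Adj a b ↔
      ((a ∈ Finset.Icc 1 n ∧ b ∈ Finset.Icc 1 n) ∧
        (a + 1 = b ∨ b + 1 = a ∨ (a = 1 ∧ b = n) ∨ (a = n ∧ b = 1))))
    (t : ℕ) (ht : 0 < t)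
    (A B : Finset ℕ) (hA : ↑A ⊆ Finset.Icc 1 n) (hB : ↑B ⊆ Finset.Icc 1 n)
    (hAc : A.card = t) (hBc : B.card = t)
    (hAi : IsIndep G A) (hBi : IsIndep G B) :
    IsIndep G (sortFst A B) ∧ IsIndep G (sortSnd A B) := by
  have hA' : ∀ x ∈ A, x ∈ Finset.Icc 1 n := fun x hx => hA hx
  have hB' : ∀ x ∈ B, x ∈ Finset.Icc 1 n := fun x hx => hB hx
  have hAb : ∀ x ∈ A, 1 ≤ x ∧ x ≤ n := fun x hx => Finset.mem_Icc.mp (hA' x hx)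
  have hBb : ∀ x ∈ B, 1 ≤ x ∧ x ≤ n := fun x hx => Finset.mem_Icc.mp (hB' x hx)
  have hlen : Multiset.card (A.val + B.val) % 2 = 0 := by
    rw [Multiset.card_add]
    have : Multiset.card A.val = t := hAc
    have : Multiset.card B.val = t := hBc
    omega
  have core : ∀ a b i j : ℕ, i % 2 = j % 2 →
      ((A.val + B.val).sort (· ≤ ·))[i]? = some a →
      ((A.val + B.val).sort (· ≤ ·))[j]? = some b → ¬ G.Adj a b := by
    intro a b i j hpar hi hj hadj
    rw [hG] at hadj
    obtain ⟨⟨haI, hbI⟩, hcase⟩ := hadj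
    have consecA : ∀ u : ℕ, ¬(u ∈ A ∧ u + 1 ∈ A) := fun u ⟨h1, h2⟩ =>
      hAi u h1 (u + 1) h2 ((hG u (u + 1)).mpr ⟨⟨hA' u h1, hA' (u + 1) h2⟩, Or.inl rfl⟩)
    have consecB : ∀ u : ℕ, ¬(u ∈ B ∧ u + 1 ∈ B) := fun u ⟨h1, h2⟩ =>
      hBi u h1 (u + 1) h2 ((hG u (u + 1)).mpr ⟨⟨hB' u h1, hB' (u + 1) h2⟩, Or.inl rfl⟩)
    have cycA : ¬(1 ∈ A ∧ n ∈ A) := fun ⟨h1, h2⟩ =>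
      hAi 1 h1 n h2 ((hG 1 n).mpr ⟨⟨hA' 1 h1, hA' n h2⟩, Or.inr (Or.inr (Or.inl ⟨rfl, rfl⟩))⟩)
    have cycB : ¬(1 ∈ B ∧ n ∈ B) := fun ⟨h1, h2⟩ =>
      hBi 1 h1 n h2 ((hG 1 n).mpr ⟨⟨hB' 1 h1, hB' n h2⟩, Or.inr (Or.inr (Or.inl ⟨rfl, rfl⟩))⟩)
    rcases hcase with h | h | ⟨h1, h2⟩ | ⟨h1, h2⟩
    · exact consec_case A B (consecA a) (consecB a) hpar hi (h ▸ hj)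
    · exact consec_case A B (consecA b) (consecB b) hpar.symm hj (h ▸ hi)
    · exact cycle_case n (by omega) A B hAb hBb cycA cycB hlen hpar (h1 ▸ hi) (h2 ▸ hj)
    · exact cycle_case n (by omega) A B hAb hBb cycA cycB hlen hpar.symm (h2 ▸ hj) (h1 ▸ hi)
  constructor
  · intro a ha b hb
    obtain ⟨i, hip, hi⟩ := mem_sortFst ha
    obtain ⟨j, hjp, hj⟩ := mem_sortFst hb
    exact core a b i j (by omega) hi hj
  · intro a ha b hb
    obtain ⟨i, hip, hi⟩ := mem_sortSnd ha
    obtain ⟨j, hjp, hj⟩ := mem_sortSnd hb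
    exact core a b i j (by omega) hi hj
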